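/- Let n ≥ 2 be an integer, let rad(n) denote the radical of n (the product of the distinct primes dividing n), and let H be the induced subgraph of the comaximal graph Γ(ℤ_n) on the vertex set {x ∈ ℤ_n : x ≠ 0, x is not a unit of ℤ_n, and rad(n) does not divide the canonical representative of x}. Then I(Γ(ℤ_n), x) = φ(n)·x + (1 + x)^{n/rad(n)} · I(H, x). -/

import Mathlib

open Polynomial Finset

/-- The comaximal graph of `ℤ/nℤ`: distinct `a, b` are adjacent iff the ideal
generated by `a` and `b` is the whole ring. -/
def comaximalGraph (n : ℕ) : SimpleGraph (ZMod n) where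
  Adj a b := a ≠ b ∧ Ideal.span ({a, b} : Set (ZMod n)) = ⊤
  symm := by
    constructor
    rintro a b ⟨hab, h⟩
    refine ⟨hab.symm, ?_⟩
    rwa [Set.pair_comm]
  loopless := by
    constructor
    rintro a ⟨h, -⟩
    exact h rfl

/-- `S` is an independent dominating set of `G`. -/
def IsIndepDomSet {V : Type*} (G : SimpleGraph V) (S : Finset V) : Prop :=
  (∀ a ∈ S, ∀ b ∈ S, ¬ G.Adj a b) ∧ ∀ v : V, v ∉ S → ∃ u ∈ S, G.Adj u v

/-- The independent domination polynomial `D_i(G, x) = Σ_k d_i(G,k) x^k`. -/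
noncomputable def indepDomPoly {V : Type*} (G : SimpleGraph V) : Polynomial ℝ :=
  ∑ k ∈ Finset.range (Nat.card V + 1),
    Polynomial.C ((Nat.card {S : Finset V // IsIndepDomSet G S ∧ S.card = k}) : ℝ) *
      Polynomial.X ^ k

/-- The independence polynomial `I(G, x) = Σ_k c_k x^k`. -/
noncomputable def indepPoly {V : Type*} (G : SimpleGraph V) : Polynomial ℝ :=
  ∑ k ∈ Finset.range (Nat.card V + 1),
    Polynomial.C ((Nat.card {S : Finset V //
        (∀ a ∈ S, ∀ b ∈ S, ¬ G.Adj a b) ∧ S.card = k}) : ℝ) *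
      Polynomial.X ^ k

/-- The radical of a natural number: the product of its distinct prime divisors. -/
def natRadical (n : ℕ) : ℕ := n.primeFactors.prod id

/- ## auxiliary lemmas -/

lemma indepPoly_eq_sum {V : Type*} [Fintype V] (G : SimpleGraph V)
    [DecidablePred (fun S : Finset V => ∀ a ∈ S, ∀ b ∈ S, ¬ G.Adj a b)] :
    indepPoly G = ∑ S ∈ (univ : Finset (Finset V)).filter
        (fun S => ∀ a ∈ S, ∀ b ∈ S, ¬ G.Adj a b), (X : ℝ[X]) ^ S.card := by
  classical
  have hmaps : ∀ S ∈ (univ : Finset (Finset V)).filter (fun S => ∀ a ∈ S, ∀ b ∈ S, ¬ G.Adj a b),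
      S.card ∈ Finset.range (Nat.card V + 1) := by
    intro S _
    rw [Finset.mem_range, Nat.lt_succ_iff, Nat.card_eq_fintype_card, ← Finset.card_univ]
    exact Finset.card_le_card (Finset.subset_univ S)
  rw [← Finset.sum_fiberwise_of_maps_to hmaps (fun S => (X : ℝ[X]) ^ S.card)]
  unfold indepPoly
  refine Finset.sum_congr rfl fun k hk => ?_
  rw [Finset.filter_filter]
  have hcard : Nat.card {S : Finset V //
      (∀ a ∈ S, ∀ b ∈ S, ¬ G.Adj a b) ∧ S.card = k}
      = ((univ : Finset (Finset V)).filter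
          (fun S => (∀ a ∈ S, ∀ b ∈ S, ¬ G.Adj a b) ∧ S.card = k)).card := by
    rw [Nat.card_eq_fintype_card, Fintype.card_subtype]
  rw [hcard]
  rw [Finset.sum_congr rfl (fun S hS => by
    rw [(Finset.mem_filter.mp hS).2.2]),
    Finset.sum_const, nsmul_eq_mul]
  simp

lemma natRadical_dvd (n : ℕ) : natRadical n ∣ n := by
  simpa [natRadical] using Nat.prod_primeFactors_dvd n

lemma natRadical_pos (n : ℕ) (hn : n ≠ 0) : 0 < natRadical n :=
  Finset.prod_pos fun p hp => (Nat.prime_of_mem_primeFactors hp).pos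

lemma prime_dvd_natRadical {n p : ℕ} (hp : p.Prime) (hpn : p ∣ n) (hn : n ≠ 0) :
    p ∣ natRadical n :=
  Finset.dvd_prod_of_mem id (Nat.mem_primeFactors.mpr ⟨hp, hpn, hn⟩)

lemma not_isUnit_of_radDvd {n : ℕ} (hn : 2 ≤ n) {a : ZMod n} (ha : natRadical n ∣ a.val) :
    ¬ IsUnit a := by
  haveI : NeZero n := ⟨by omega⟩
  intro hu
  have hc : Nat.Coprime a.val n :=
    (ZMod.isUnit_iff_coprime a.val n).mp (by rwa [ZMod.natCast_zmod_val])
  obtain ⟨p, hp, hpn⟩ := Nat.exists_prime_and_dvd (by omega : n ≠ 1)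
  have hpa : p ∣ a.val := (prime_dvd_natRadical hp hpn (by omega)).trans ha
  have h1 : p ∣ 1 := hc ▸ Nat.dvd_gcd hpa hpn
  exact hp.one_lt.ne' (Nat.dvd_one.mp h1)

lemma card_filter_range_dvd (n r : ℕ) (hr : 0 < r) (h : r ∣ n) :
    ((Finset.range n).filter (fun m => r ∣ m)).card = n / r := by
  have himg : (Finset.range n).filter (fun m => r ∣ m)
      = (Finset.range (n / r)).image (fun k => r * k) := by
    ext m
    simp only [mem_filter, mem_range, mem_image]
    constructor
    · rintro ⟨hlt, k, rfl⟩
      exact ⟨k, (Nat.lt_div_iff_mul_lt' h k).mpr hlt, rfl⟩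
    · rintro ⟨k, hk, rfl⟩
      exact ⟨(Nat.lt_div_iff_mul_lt' h k).mp hk, k, rfl⟩
  rw [himg, Finset.card_image_of_injective _ fun a b hab => Nat.eq_of_mul_eq_mul_left hr hab,
    Finset.card_range]

lemma card_nil (n : ℕ) (hn : 2 ≤ n) [NeZero n]
    [DecidablePred (fun x : ZMod n => natRadical n ∣ x.val)] :
    ((univ : Finset (ZMod n)).filter (fun x => natRadical n ∣ x.val)).card
      = n / natRadical n := by
  rw [← card_filter_range_dvd n (natRadical n) (natRadical_pos n (by omega)) (natRadical_dvd n)]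
  apply Finset.card_bij (fun (x : ZMod n) _ => x.val)
  · intro x hx
    simp only [mem_filter, mem_range]
    exact ⟨x.val_lt, (mem_filter.mp hx).2⟩
  · intro a _ b _ hab
    exact ZMod.val_injective n hab
  · intro m hm
    simp only [mem_filter, mem_range] at hm
    refine ⟨(m : ZMod n), mem_filter.mpr ⟨mem_univ _, ?_⟩, ZMod.val_cast_of_lt hm.1⟩
    rw [ZMod.val_cast_of_lt hm.1]; exact hm.2

lemma card_units_filter (n : ℕ) [NeZero n]
    [DecidablePred (fun x : ZMod n => IsUnit x)] :
    ((univ : Finset (ZMod n)).filter (fun x => IsUnit x)).card = n.totient := by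
  rw [← ZMod.card_units_eq_totient n, ← Finset.card_univ]
  symm
  apply Finset.card_bij (fun (u : (ZMod n)ˣ) _ => (u : ZMod n))
  · intro u _
    exact mem_filter.mpr ⟨mem_univ _, u.isUnit⟩
  · intro a _ b _ hab
    exact Units.ext hab
  · intro x hx
    exact ⟨(mem_filter.mp hx).2.unit, mem_univ _, rfl⟩

lemma finset_inter_union_distrib_left {α : Type*} [DecidableEq α] (s t u : Finset α) :
    s ∩ (t ∪ u) = s ∩ t ∪ s ∩ u := inf_sup_left ..

lemma finset_union_inter_distrib_right {α : Type*} [DecidableEq α] (s t u : Finset α) :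
    (s ∪ t) ∩ u = s ∩ u ∪ t ∩ u := inf_sup_right ..

lemma adj_of_isUnit {n : ℕ} {a b : ZMod n} (ha : IsUnit a) (hab : a ≠ b) :
    (comaximalGraph n).Adj a b :=
  ⟨hab, Ideal.eq_top_of_isUnit_mem _ (Ideal.subset_span (by simp)) ha⟩

lemma not_adj_nil {n : ℕ} (hn : 2 ≤ n) {a b : ZMod n} (ha : natRadical n ∣ a.val)
    (hb : ¬ IsUnit b) : ¬ (comaximalGraph n).Adj a b := by
  haveI : NeZero n := ⟨by omega⟩
  rintro ⟨-, htop⟩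
  obtain ⟨c, d, hcd⟩ := Ideal.mem_span_pair.mp
    (htop ▸ Submodule.mem_top : (1 : ZMod n) ∈ Ideal.span ({a, b} : Set (ZMod n)))
  have hbc : ¬ Nat.Coprime b.val n := fun h =>
    hb (by simpa [ZMod.natCast_zmod_val] using (ZMod.isUnit_iff_coprime b.val n).mpr h)
  obtain ⟨p, hp, hpb, hpn⟩ := Nat.Prime.not_coprime_iff_dvd.mp hbc
  have hpa : p ∣ a.val := (prime_dvd_natRadical hp hpn (by omega)).trans ha
  haveI : Fact p.Prime := ⟨hp⟩
  have h1 : (ZMod.castHom hpn (ZMod p)) (c * a + d * b) = 1 := by rw [hcd, map_one]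
  rw [map_add, map_mul, map_mul] at h1
  have hA : (ZMod.castHom hpn (ZMod p)) a = 0 := by
    rw [ZMod.castHom_apply, ← ZMod.natCast_val, ZMod.natCast_eq_zero_iff]
    exact hpa
  have hB : (ZMod.castHom hpn (ZMod p)) b = 0 := by
    rw [ZMod.castHom_apply, ← ZMod.natCast_val, ZMod.natCast_eq_zero_iff]
    exact hpb
  rw [hA, hB, mul_zero, mul_zero, add_zero] at h1
  exact zero_ne_one h1

/-- `∑_{A ⊆ B} X^{|A|} = (1+X)^{|B|}`. -/
lemma sum_powerset_X_pow {α : Type*} (B : Finset α) :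
    ∑ A ∈ B.powerset, (X : ℝ[X]) ^ A.card = (1 + X) ^ B.card := by
  have h : ((1 : ℝ[X]) + X) ^ B.card = (X + 1) ^ B.card := by rw [add_comm]
  rw [Finset.sum_powerset_apply_card (fun m => (X : ℝ[X]) ^ m), h, add_pow]
  refine Finset.sum_congr rfl fun k hk => ?_
  rw [one_pow, mul_one, nsmul_eq_mul, mul_comm]


/-- For `n ≥ 2`, `I(Γ(ℤ_n), x) = φ(n)·x + (1 + x)^(n/rad n) · I(H, x)`, where `H` is the
induced subgraph on nonzero non-units whose canonical representative is not divisible by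
`rad n`. -/
theorem stmt_18 (n : ℕ) (hn : 2 ≤ n) :
    indepPoly (comaximalGraph n) =
      Polynomial.C ((Nat.totient n : ℝ)) * Polynomial.X +
        (1 + Polynomial.X) ^ (n / natRadical n) *
          indepPoly ((comaximalGraph n).induce
            {x : ZMod n | x ≠ 0 ∧ ¬ IsUnit x ∧ ¬ (natRadical n ∣ x.val)}) := by
  classical
  haveI : NeZero n := ⟨by omega⟩
  set G := comaximalGraph n with hG
  set Wset : Set (ZMod n) := {x : ZMod n | x ≠ 0 ∧ ¬ IsUnit x ∧ ¬ (natRadical n ∣ x.val)}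
    with hWset
  haveI : Fintype ↥Wset := Fintype.ofFinite _
  set Nilf : Finset (ZMod n) := univ.filter (fun x => natRadical n ∣ x.val) with hNilf
  set Wf : Finset (ZMod n) := univ.filter (fun x => x ∈ Wset) with hWf
  -- basic membership facts
  have hNil_nonunit : ∀ x ∈ Nilf, ¬ IsUnit x := by
    intro x hx
    exact not_isUnit_of_radDvd hn (mem_filter.mp hx).2
  have hWf_nonunit : ∀ x ∈ Wf, ¬ IsUnit x := by
    intro x hx
    exact ((mem_filter.mp hx).2 : x ∈ Wset).2.1
  have hWf_notnil : ∀ x ∈ Wf, ¬ natRadical n ∣ x.val := by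
    intro x hx
    exact ((mem_filter.mp hx).2 : x ∈ Wset).2.2
  have hcover : ∀ x : ZMod n, ¬ IsUnit x → x ∈ Nilf ∪ Wf := by
    intro x hx
    by_cases hd : natRadical n ∣ x.val
    · exact mem_union_left _ (mem_filter.mpr ⟨mem_univ _, hd⟩)
    · refine mem_union_right _ (mem_filter.mpr ⟨mem_univ _, ?_⟩)
      refine ⟨?_, hx, hd⟩
      rintro rfl
      exact hd (by simp [ZMod.val_zero])
  have hdisj : Disjoint Nilf Wf := by
    rw [Finset.disjoint_left]
    intro x hx hx'
    exact hWf_notnil x hx' (mem_filter.mp hx).2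
  -- rewrite both independence polynomials as sums
  rw [indepPoly_eq_sum G, indepPoly_eq_sum (G.induce Wset)]
  -- split off the sets containing a unit
  rw [← Finset.sum_filter_add_sum_filter_not
    ((univ : Finset (Finset (ZMod n))).filter (fun S => ∀ a ∈ S, ∀ b ∈ S, ¬ G.Adj a b))
    (fun S => ∃ u ∈ S, IsUnit u) (fun S => (X : ℝ[X]) ^ S.card)]
  congr 1
  · -- term with a unit: equals C φ(n) * X
    have himg : ((univ : Finset (Finset (ZMod n))).filter
          (fun S => ∀ a ∈ S, ∀ b ∈ S, ¬ G.Adj a b)).filter (fun S => ∃ u ∈ S, IsUnit u)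
        = (univ.filter (fun x : ZMod n => IsUnit x)).image (fun u => {u}) := by
      ext S
      simp only [mem_filter, mem_image, mem_univ, true_and]
      constructor
      · rintro ⟨hind, u, hu, huu⟩
        refine ⟨u, huu, ?_⟩
        symm
        rw [Finset.eq_singleton_iff_unique_mem]
        refine ⟨hu, fun b hb => ?_⟩
        by_contra hbu
        exact hind u hu b hb (adj_of_isUnit huu (fun h => hbu h.symm))
      · rintro ⟨u, huu, rfl⟩
        refine ⟨?_, u, mem_singleton_self u, huu⟩
        intro a ha b hb
        rw [mem_singleton] at ha hb
        subst ha; subst hb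
        exact G.loopless.irrefl _
    rw [himg, Finset.sum_image (fun a _ b _ h => singleton_inj.mp h)]
    simp only [card_singleton, pow_one]
    rw [Finset.sum_const, card_units_filter n, nsmul_eq_mul]
    simp
  · -- term without units
    rw [Finset.filter_filter]
    have hbij : ∑ S ∈ (univ : Finset (Finset (ZMod n))).filter
          (fun S => (∀ a ∈ S, ∀ b ∈ S, ¬ G.Adj a b) ∧ ¬ ∃ u ∈ S, IsUnit u),
          (X : ℝ[X]) ^ S.card
        = ∑ p ∈ Nilf.powerset ×ˢ (Wf.powerset.filter
            (fun T => ∀ a ∈ T, ∀ b ∈ T, ¬ G.Adj a b)),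
          (X : ℝ[X]) ^ (p.1.card + p.2.card) := by
      refine Finset.sum_nbij' (fun S => (S ∩ Nilf, S ∩ Wf)) (fun p => p.1 ∪ p.2)
        ?_ ?_ ?_ ?_ ?_
      · intro S hS
        simp only [mem_filter, mem_univ, true_and] at hS
        obtain ⟨hind, hnou⟩ := hS
        simp only [mem_product, mem_powerset, mem_filter]
        refine ⟨inter_subset_right, inter_subset_right, ?_⟩
        intro a ha b hb
        exact hind a (mem_of_mem_inter_left ha) b (mem_of_mem_inter_left hb)
      · intro p hp
        simp only [mem_product, mem_powerset, mem_filter] at hp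
        obtain ⟨hA, hT, hind⟩ := hp
        simp only [mem_filter, mem_univ, true_and]
        push_neg
        have hmem : ∀ x ∈ p.1 ∪ p.2, ¬ IsUnit x := by
          intro x hx
          rcases mem_union.mp hx with h | h
          · exact hNil_nonunit x (hA h)
          · exact hWf_nonunit x (hT h)
        refine ⟨?_, fun u hu => hmem u hu⟩
        intro a ha b hb hadj
        rcases mem_union.mp ha with h1 | h1
        · exact not_adj_nil hn (mem_filter.mp (hA h1)).2 (hmem b hb) hadj
        · rcases mem_union.mp hb with h2 | h2
          · exact not_adj_nil hn (mem_filter.mp (hA h2)).2 (hmem a ha) hadj.symm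
          · exact hind a h1 b h2 hadj
      · intro S hS
        simp only [mem_filter, mem_univ, true_and] at hS
        push_neg at hS
        have hsub : S ⊆ Nilf ∪ Wf := fun x hx => hcover x (hS.2 x hx)
        simp only
        rw [← finset_inter_union_distrib_left, Finset.inter_eq_left.mpr hsub]
      · intro p hp
        simp only [mem_product, mem_powerset, mem_filter] at hp
        obtain ⟨hA, hT, -⟩ := hp
        have h1 : (p.1 ∪ p.2) ∩ Nilf = p.1 := by
          rw [finset_union_inter_distrib_right, Finset.inter_eq_left.mpr hA,
            Finset.disjoint_iff_inter_eq_empty.mp (Finset.disjoint_of_subset_left hT hdisj.symm), union_empty]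
        have h2 : (p.1 ∪ p.2) ∩ Wf = p.2 := by
          rw [finset_union_inter_distrib_right, Finset.inter_eq_left.mpr hT,
            Finset.disjoint_iff_inter_eq_empty.mp (Finset.disjoint_of_subset_left hA hdisj), empty_union]
        simp only [h1, h2]
      · intro S hS
        simp only [mem_filter, mem_univ, true_and] at hS
        push_neg at hS
        have hsub : S ⊆ Nilf ∪ Wf := fun x hx => hcover x (hS.2 x hx)
        have hdecomp : S = (S ∩ Nilf) ∪ (S ∩ Wf) := by
          rw [← finset_inter_union_distrib_left, Finset.inter_eq_left.mpr hsub]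
        simp only
        rw [← Finset.card_union_of_disjoint
          (Finset.disjoint_of_subset_left inter_subset_right
            (Finset.disjoint_of_subset_right inter_subset_right hdisj)), ← hdecomp]
    rw [hbij, Finset.sum_product]
    have hfactor : ∀ A ∈ Nilf.powerset,
        ∑ T ∈ Wf.powerset.filter (fun T => ∀ a ∈ T, ∀ b ∈ T, ¬ G.Adj a b),
          (X : ℝ[X]) ^ (A.card + T.card)
        = (X : ℝ[X]) ^ A.card * ∑ T ∈ Wf.powerset.filter
            (fun T => ∀ a ∈ T, ∀ b ∈ T, ¬ G.Adj a b), (X : ℝ[X]) ^ T.card := by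
      intro A _
      rw [Finset.mul_sum]
      exact Finset.sum_congr rfl fun T _ => pow_add _ _ _
    rw [Finset.sum_congr rfl hfactor, ← Finset.sum_mul, sum_powerset_X_pow]
    have hcardNil : Nilf.card = n / natRadical n := card_nil n hn
    rw [hcardNil]
    congr 1
    -- identify the H-sum
    refine Finset.sum_nbij' (fun T => T.subtype (fun x => x ∈ Wset))
      (fun T' => T'.map (Function.Embedding.subtype _)) ?_ ?_ ?_ ?_ ?_
    · intro T hT
      simp only [mem_filter, mem_powerset] at hT
      obtain ⟨hTW, hind⟩ := hT
      simp only [mem_filter, mem_univ, true_and]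
      intro a ha b hb hadj
      rw [Finset.mem_subtype] at ha hb
      refine hind ↑a ha ↑b hb ?_
      exact hadj
    · intro T' hT'
      simp only [mem_filter, mem_univ, true_and] at hT'
      simp only [mem_filter, mem_powerset]
      constructor
      · intro x hx
        exact mem_filter.mpr ⟨mem_univ _, Finset.property_of_mem_map_subtype T' hx⟩
      · intro a ha b hb hadj
        obtain ⟨a', ha', rfl⟩ := Finset.mem_map.mp ha
        obtain ⟨b', hb', rfl⟩ := Finset.mem_map.mp hb
        exact hT' a' ha' b' hb' hadj
    · intro T hT
      simp only [mem_filter, mem_powerset] at hT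
      apply Finset.subtype_map_of_mem
      intro x hx
      exact (mem_filter.mp (hT.1 hx)).2
    · intro T' hT'
      ext a
      simp [Finset.mem_subtype, Finset.mem_map, Function.Embedding.coe_subtype]
    · intro T hT
      simp only [mem_filter, mem_powerset] at hT
      rw [Finset.card_subtype, Finset.filter_true_of_mem
        (fun x hx => (mem_filter.mp (hT.1 hx)).2)]
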